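/- Let a,b,c ≥ 2 and L = L(a,b,c). Define the positive cone L₊ = { n₁x₁ + n₂x₂ + n₃x₃ : n₁,n₂,n₃ ∈ ℕ } and write y ≥ 0 iff y ∈ L₊. Then an element y ∈ L with normal form y = n₁x₁ + n₂x₂ + n₃x₃ + m·c⃗ (0 ≤ nᵢ < pᵢ, where (p₁,p₂,p₃)=(a,b,c)) satisfies y ≥ 0 if and only if m ≥ 0. -/

import Mathlib

/-- The subgroup of relations defining L(a,b,c). -/
def LRel (a b c : ℕ) : AddSubgroup (ℤ × ℤ × ℤ) :=
  AddSubgroup.closure {((a : ℤ), -(b : ℤ), 0), ((0 : ℤ), (b : ℤ), -(c : ℤ))}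

/-- The rank-one abelian group L(a,b,c) on generators x₁,x₂,x₃ with a·x₁ = b·x₂ = c·x₃. -/
abbrev LGrp (a b c : ℕ) := (ℤ × ℤ × ℤ) ⧸ LRel a b c

def Lx1 (a b c : ℕ) : LGrp a b c := QuotientAddGroup.mk (1, 0, 0)
def Lx2 (a b c : ℕ) : LGrp a b c := QuotientAddGroup.mk (0, 1, 0)
def Lx3 (a b c : ℕ) : LGrp a b c := QuotientAddGroup.mk (0, 0, 1)

/-- Canonical element c⃗ = a·x₁. -/
def Lcan (a b c : ℕ) : LGrp a b c := (a : ℤ) • Lx1 a b c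

/-- Dualizing element ω = c⃗ − (x₁+x₂+x₃). -/
def Lomega (a b c : ℕ) : LGrp a b c :=
  Lcan a b c - (Lx1 a b c + Lx2 a b c + Lx3 a b c)

/-- Dominant element δ⃗ = c⃗ + 2ω. -/
def Ldelta (a b c : ℕ) : LGrp a b c := Lcan a b c + (2 : ℤ) • Lomega a b c

/-- The partial order on L given by the positive cone ℕx₁+ℕx₂+ℕx₃ : u ≤ v iff v−u ∈ ℕx₁+ℕx₂+ℕx₃. -/
def Lle (a b c : ℕ) (u v : LGrp a b c) : Prop :=
  ∃ n1 n2 n3 : ℕ,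
    v - u = (n1 : ℤ) • Lx1 a b c + (n2 : ℤ) • Lx2 a b c + (n3 : ℤ) • Lx3 a b c

lemma mem_LRel (a b c : ℕ) (v : ℤ × ℤ × ℤ) :
    v ∈ LRel a b c ↔
      ∃ s t : ℤ, s • ((a : ℤ), -(b : ℤ), (0:ℤ)) + t • ((0 : ℤ), (b : ℤ), -(c : ℤ)) = v := by
  simpa [LRel, zsmul_eq_mul] using AddSubgroup.mem_closure_pair (C := ℤ × ℤ × ℤ)
    (x := ((a : ℤ), -(b : ℤ), 0)) (y := ((0 : ℤ), (b : ℤ), -(c : ℤ))) (z := v)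

lemma mk_smul' (a b c : ℕ) (n : ℤ) (v : ℤ × ℤ × ℤ) :
    n • (QuotientAddGroup.mk v : LGrp a b c) = QuotientAddGroup.mk (n • v) := rfl

lemma mk_comb (a b c : ℕ) (n1 n2 n3 : ℤ) :
    n1 • Lx1 a b c + n2 • Lx2 a b c + n3 • Lx3 a b c
      = QuotientAddGroup.mk (n1, n2, n3) := by
  simp only [Lx1, Lx2, Lx3, mk_smul', ← QuotientAddGroup.mk_add]
  congr 1
  simp [Prod.ext_iff]

/-- An element in normal form n₁x₁+n₂x₂+n₃x₃+m·c⃗ (0 ≤ nᵢ < pᵢ) is ≥ 0 iff m ≥ 0. -/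
theorem nonneg_iff_m_nonneg (a b c : ℕ) (ha : 2 ≤ a) (hb : 2 ≤ b) (hc : 2 ≤ c)
    (m n1 n2 n3 : ℤ)
    (h1 : 0 ≤ n1 ∧ n1 < (a : ℤ)) (h2 : 0 ≤ n2 ∧ n2 < (b : ℤ))
    (h3 : 0 ≤ n3 ∧ n3 < (c : ℤ)) :
    Lle a b c 0 (n1 • Lx1 a b c + n2 • Lx2 a b c + n3 • Lx3 a b c + m • Lcan a b c)
      ↔ 0 ≤ m := by
  have ha' : (2 : ℤ) ≤ (a : ℤ) := by exact_mod_cast ha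
  have hb' : (2 : ℤ) ≤ (b : ℤ) := by exact_mod_cast hb
  have hc' : (2 : ℤ) ≤ (c : ℤ) := by exact_mod_cast hc
  have key : (n1 • Lx1 a b c + n2 • Lx2 a b c + n3 • Lx3 a b c + m • Lcan a b c : LGrp a b c)
      = QuotientAddGroup.mk (n1 + m * a, n2, n3) := by
    rw [Lcan, smul_smul]
    have := mk_comb a b c (n1 + m * a) n2 n3
    rw [← this]
    module
  constructor
  · rintro ⟨k1, k2, k3, hk⟩
    rw [sub_zero, key, mk_comb] at hk
    rw [QuotientAddGroup.eq] at hk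
    rw [mem_LRel] at hk
    obtain ⟨s, t, hzeq⟩ := hk
    have e1 : (k1 : ℤ) = n1 + m * a + s * a := by
      have := congrArg Prod.fst hzeq
      simp [Prod.smul_def] at this ⊢
      linarith [this]
    have e2 : (k2 : ℤ) = n2 + (-s + t) * b := by
      have := congrArg (Prod.fst ∘ Prod.snd) hzeq
      simp [Prod.smul_def] at this ⊢
      linarith [this]
    have e3 : (k3 : ℤ) = n3 + (-t) * c := by
      have := congrArg (Prod.snd ∘ Prod.snd) hzeq
      simp [Prod.smul_def] at this ⊢
      linarith [this]
    have hk1 : (0 : ℤ) ≤ k1 := Int.natCast_nonneg k1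
    have hk2 : (0 : ℤ) ≤ k2 := Int.natCast_nonneg k2
    have hk3 : (0 : ℤ) ≤ k3 := Int.natCast_nonneg k3
    have hms : 0 ≤ m + s := by
      by_contra h
      push_neg at h
      have : m + s ≤ -1 := by omega
      nlinarith [h1.1, h1.2]
    have hts : 0 ≤ -s + t := by
      by_contra h
      push_neg at h
      have : -s + t ≤ -1 := by omega
      nlinarith [h2.1, h2.2]
    have hnt : 0 ≤ -t := by
      by_contra h
      push_neg at h
      have : -t ≤ -1 := by omega
      nlinarith [h3.1, h3.2]
    linarith
  · intro hm
    refine ⟨(n1 + m * a).toNat, n2.toNat, n3.toNat, ?_⟩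
    rw [sub_zero, key, mk_comb]
    congr 1
    have hn1 : 0 ≤ n1 + m * a := by by_contra h; push_neg at h; nlinarith [h1.1]
    have t1 : ((n1 + m * a).toNat : ℤ) = n1 + m * a := Int.toNat_of_nonneg hn1
    have t2 : (n2.toNat : ℤ) = n2 := Int.toNat_of_nonneg h2.1
    have t3 : (n3.toNat : ℤ) = n3 := Int.toNat_of_nonneg h3.1
    simp [Prod.ext_iff, t1, t2, t3]
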